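/- Let K be a standard unconditional convex body in ℝ^n and let S = K ∩ ℝ^n_{≥0}, where ℝ^n_{≥0} is the nonnegative orthant. Then for every i ∈ {1, …, n}, μ_i(S) = 2·μ_i(K). -/

import Mathlib

open MeasureTheory Pointwise

/-- The integer lattice `ℤⁿ` viewed as a subset of `ℝⁿ`. -/
def intLattice (n : ℕ) : Set (EuclideanSpace ℝ (Fin n)) :=
  {x | ∀ j, ∃ m : ℤ, x j = (m : ℝ)}

/-- The `i`-th covering minimum `μ_i(K, ℤⁿ)` of a convex body `K ⊆ ℝⁿ`:
the least `μ > 0` such that `μK + ℤⁿ` meets every `(n-i)`-dimensional affine subspace. -/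
noncomputable def covMin (n i : ℕ) (K : Set (EuclideanSpace ℝ (Fin n))) : ℝ :=
  sInf {μ : ℝ | 0 < μ ∧ ∀ L : AffineSubspace ℝ (EuclideanSpace ℝ (Fin n)),
    (L : Set (EuclideanSpace ℝ (Fin n))).Nonempty →
    Module.finrank ℝ L.direction = n - i →
    ((μ • K + intLattice n) ∩ (L : Set (EuclideanSpace ℝ (Fin n)))).Nonempty}

/-- A set `K ⊆ ℝⁿ` is standard unconditional if it is symmetric with respect to every
coordinate hyperplane, i.e. stable under all sign changes of the coordinates. -/
def StdUnconditional (n : ℕ) (K : Set (EuclideanSpace ℝ (Fin n))) : Prop :=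
  ∀ x ∈ K, ∀ ε : Fin n → ℝ, (∀ j, ε j = 1 ∨ ε j = -1) →
    (WithLp.toLp 2 (fun j => ε j * x j) : EuclideanSpace ℝ (Fin n)) ∈ K

/-- The nonnegative orthant `ℝⁿ_{≥0}`. -/
def orthant (n : ℕ) : Set (EuclideanSpace ℝ (Fin n)) := {x | ∀ j, 0 ≤ x j}

namespace CovMinAux

variable {n : ℕ}

lemma absorb_aux {K : Set (EuclideanSpace ℝ (Fin n))} (hKconv : Convex ℝ K)
    (hKu : StdUnconditional n K) (F : Finset (Fin n)) :
    ∀ x ∈ K, ∀ y : EuclideanSpace ℝ (Fin n),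
      (∀ j ∈ F, |y j| ≤ |x j|) → (∀ j ∉ F, y j = x j) → y ∈ K := by
  classical
  induction F using Finset.induction_on with
  | empty =>
    intro x hx y _ h2
    have : y = x := PiLp.ext fun j => h2 j (by simp)
    rwa [this]
  | @insert a F ha ih =>
    intro x hx y h1 h2
    set w : EuclideanSpace ℝ (Fin n) := x + (y a - x a) • EuclideanSpace.single a 1 with hwdef
    have hwl : ∀ l, w l = if l = a then y a else x l := by
      intro l
      have h0 : w l = x l + (y a - x a) * (EuclideanSpace.single a (1:ℝ)) l := by
        rw [hwdef]
        simp [PiLp.add_apply, PiLp.smul_apply, smul_eq_mul]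
      rw [h0, EuclideanSpace.single_apply]
      by_cases hl : l = a
      · rw [if_pos hl, if_pos hl, hl]; ring
      · rw [if_neg hl, if_neg hl]; ring
    have hya : |y a| ≤ |x a| := h1 a (Finset.mem_insert_self a F)
    have hwK : w ∈ K := by
      by_cases hxa : x a = 0
      · have hy0 : y a = 0 := by
          have := hya; rw [hxa] at this; simpa using this
        have hwx : w = x := PiLp.ext fun l => by
          rw [hwl l]
          by_cases hl : l = a
          · rw [if_pos hl, hl, hy0, hxa]
          · rw [if_neg hl]
        rwa [hwx]
      · set ε : Fin n → ℝ := fun j => if j = a then -1 else 1 with hε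
        have hεs : ∀ j, ε j = 1 ∨ ε j = -1 := by
          intro j; by_cases hj : j = a <;> simp [hε, hj]
        obtain ⟨z, hzK, hzl⟩ : ∃ z : EuclideanSpace ℝ (Fin n), z ∈ K ∧ ∀ l, z l = ε l * x l :=
          ⟨_, hKu x hx ε hεs, fun l => rfl⟩
        set t : ℝ := (1 + y a / x a) / 2 with ht
        have hratio : |y a / x a| ≤ 1 := by
          rw [abs_div]
          exact div_le_one_of_le₀ hya (abs_nonneg _)
        have hr1 : -1 ≤ y a / x a := (abs_le.mp hratio).1
        have hr2 : y a / x a ≤ 1 := (abs_le.mp hratio).2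
        have ht0 : 0 ≤ t := by rw [ht]; linarith
        have ht1 : 0 ≤ 1 - t := by linarith
        have hcomb := hKconv hx hzK ht0 ht1 (by ring)
        have hweq : w = t • x + (1 - t) • z := by
          ext l
          have h0 : (t • x + (1 - t) • z) l = t * x l + (1 - t) * z l := by
            simp [PiLp.add_apply, PiLp.smul_apply, smul_eq_mul]
          rw [h0, hwl l, hzl l]
          have hεl : ∀ m : Fin n, ε m = if m = a then -1 else 1 := fun m => rfl
          by_cases hl : l = a
          · rw [if_pos hl, hεl l, if_pos hl, hl]
            rw [ht]
            field_simp
            ring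
          · rw [if_neg hl, hεl l, if_neg hl]
            ring
        rw [hweq]; exact hcomb
    refine ih w hwK y ?_ ?_
    · intro j hj
      have hja : j ≠ a := by rintro rfl; exact ha hj
      rw [hwl j, if_neg hja]
      exact h1 j (Finset.mem_insert_of_mem hj)
    · intro j hj
      by_cases hja : j = a
      · rw [hwl j, if_pos hja, hja]
      · rw [hwl j, if_neg hja]
        exact h2 j (by simp [hja, hj])

lemma absorb {K : Set (EuclideanSpace ℝ (Fin n))} (hKconv : Convex ℝ K)
    (hKu : StdUnconditional n K) {x : EuclideanSpace ℝ (Fin n)} (hx : x ∈ K)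
    (y : EuclideanSpace ℝ (Fin n)) (h : ∀ j, |y j| ≤ |x j|) : y ∈ K :=
  absorb_aux hKconv hKu Finset.univ x hx y (fun j _ => h j) (fun j hj => absurd (Finset.mem_univ j) hj)



/-- corner point: value `c` on coordinates in `I`, `0` elsewhere. -/
noncomputable def cornerPt (I : Finset (Fin n)) (c : ℝ) : EuclideanSpace ℝ (Fin n) :=
  (c : ℝ) • (∑ j ∈ I, EuclideanSpace.single j (1:ℝ))

lemma cornerPt_apply (I : Finset (Fin n)) (c : ℝ) (l : Fin n) :
    cornerPt I c l = if l ∈ I then c else 0 := by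
  classical
  have h0 : cornerPt I c l = c * (∑ j ∈ I, EuclideanSpace.single j (1:ℝ)) l := by
    simp [cornerPt, PiLp.smul_apply, smul_eq_mul]
  have h1 : (∑ j ∈ I, EuclideanSpace.single j (1:ℝ)) l
      = ∑ j ∈ I, (EuclideanSpace.single j (1:ℝ)) l := by
    rw [WithLp.ofLp_sum, Finset.sum_apply]
  rw [h0, h1]
  by_cases hl : l ∈ I
  · rw [if_pos hl, Finset.sum_eq_single l]
    · simp [EuclideanSpace.single_apply]
    · intro b _ hb; simp [EuclideanSpace.single_apply, Ne.symm hb]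
    · intro h; exact absurd hl h
  · rw [if_neg hl, Finset.sum_eq_zero, mul_zero]
    intro b hb
    have : l ≠ b := fun h => hl (h ▸ hb)
    simp [EuclideanSpace.single_apply, this]

/-- projection onto coordinates in `I`. -/
def projI (I : Finset (Fin n)) : EuclideanSpace ℝ (Fin n) →ₗ[ℝ] (↥I → ℝ) where
  toFun x := fun j => x (j : Fin n)
  map_add' x y := by funext j; simp [PiLp.add_apply]
  map_smul' c x := by funext j; simp [PiLp.smul_apply]

lemma projI_surjective (I : Finset (Fin n)) : Function.Surjective (projI I) := by
  classical
  intro g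
  refine ⟨WithLp.toLp 2 (fun j => if h : j ∈ I then g ⟨j, h⟩ else 0 : Fin n → ℝ), ?_⟩
  funext j
  show (if h : (j:Fin n) ∈ I then g ⟨j, h⟩ else 0) = g j
  rw [dif_pos j.2]

lemma mem_ker_projI (I : Finset (Fin n)) (x : EuclideanSpace ℝ (Fin n)) :
    x ∈ LinearMap.ker (projI I) ↔ ∀ j ∈ I, x j = 0 := by
  constructor
  · intro h j hj
    have : projI I x = 0 := h
    exact congrFun this ⟨j, hj⟩
  · intro h
    show projI I x = 0
    funext j
    exact h j j.2

lemma finrank_ker_projI (I : Finset (Fin n)) :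
    Module.finrank ℝ (LinearMap.ker (projI I)) = n - I.card := by
  have h1 := LinearMap.finrank_range_add_finrank_ker (projI I)
  have h2 : LinearMap.range (projI I) = ⊤ := LinearMap.range_eq_top.mpr (projI_surjective I)
  rw [h2] at h1
  have h3 : Module.finrank ℝ (⊤ : Submodule ℝ (↥I → ℝ)) = I.card := by
    rw [finrank_top, Module.finrank_fintype_fun_eq_card, Fintype.card_coe]
  rw [h3, finrank_euclideanSpace_fin] at h1
  omega

/-- span of coordinate vectors indexed by `I`. -/
def sspan (I : Finset (Fin n)) : Submodule ℝ (EuclideanSpace ℝ (Fin n)) :=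
  Submodule.span ℝ ((fun j => EuclideanSpace.single j (1:ℝ)) '' (I : Set (Fin n)))

lemma sspan_mono {I J : Finset (Fin n)} (h : I ⊆ J) : sspan I ≤ sspan J :=
  Submodule.span_mono (Set.image_mono (by exact_mod_cast h))

lemma apply_eq_zero_of_mem_sspan {I : Finset (Fin n)} {x : EuclideanSpace ℝ (Fin n)}
    (hx : x ∈ sspan I) {l : Fin n} (hl : l ∉ I) : x l = 0 := by
  classical
  -- the set of vectors vanishing at l is a submodule
  set W : Submodule ℝ (EuclideanSpace ℝ (Fin n)) :=
    { carrier := {v | v l = 0}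
      add_mem' := by intro a b haa hbb; show (a + b) l = 0; rw [PiLp.add_apply, haa, hbb, add_zero]
      zero_mem' := rfl
      smul_mem' := by intro c a haa; show (c • a) l = 0; rw [PiLp.smul_apply, haa, smul_zero] } with hW
  have hle : sspan I ≤ W := by
    rw [sspan]
    apply Submodule.span_le.mpr
    rintro _ ⟨j, hj, rfl⟩
    show EuclideanSpace.single j (1:ℝ) l = 0
    rw [EuclideanSpace.single_apply, if_neg]
    intro h; exact hl (h ▸ hj)
  exact hle hx

lemma span_single_top :
    Submodule.span ℝ (Set.range (fun j : Fin n => EuclideanSpace.single j (1:ℝ))) = ⊤ := by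
  have hfb : (fun j : Fin n => EuclideanSpace.single j (1:ℝ))
      = ⇑((EuclideanSpace.basisFun (Fin n) ℝ).toBasis) := by
    funext j
    rw [OrthonormalBasis.coe_toBasis, EuclideanSpace.basisFun_apply]
  rw [hfb, Module.Basis.span_eq]

/-- Every subspace can be completed to the whole space by few coordinate vectors. -/
lemma exists_coord_sup_top :
    ∀ (m : ℕ) (V : Submodule ℝ (EuclideanSpace ℝ (Fin n))), n ≤ Module.finrank ℝ V + m →
      ∃ J : Finset (Fin n), J.card ≤ m ∧ V ⊔ sspan J = ⊤ := by
  classical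
  intro m
  induction m with
  | zero =>
    intro V hV
    have hle : Module.finrank ℝ V ≤ n := by
      have := Submodule.finrank_le V
      rwa [finrank_euclideanSpace_fin] at this
    have htop : V = ⊤ := by
      apply Submodule.eq_top_of_finrank_eq
      rw [finrank_euclideanSpace_fin]
      omega
    exact ⟨∅, le_refl 0, by simp [htop, sspan]⟩
  | succ m ih =>
    intro V hV
    by_cases htop : V = ⊤
    · exact ⟨∅, Nat.zero_le _, by simp [htop, sspan]⟩
    · have hex : ∃ j : Fin n, EuclideanSpace.single j (1:ℝ) ∉ V := by
        by_contra h
        push_neg at h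
        apply htop
        rw [← top_le_iff, ← span_single_top]
        apply Submodule.span_le.mpr
        rintro _ ⟨j, rfl⟩
        exact h j
      obtain ⟨j, hj⟩ := hex
      set V' := V ⊔ Submodule.span ℝ {EuclideanSpace.single j (1:ℝ)} with hV'
      have hlt : V < V' := by
        apply lt_of_le_of_ne le_sup_left
        intro h
        apply hj
        rw [h]
        exact Submodule.mem_sup_right (Submodule.mem_span_singleton_self _)
      have hfr_lt : Module.finrank ℝ V < Module.finrank ℝ V' :=
        Submodule.finrank_lt_finrank_of_lt hlt
      have hfr_le : Module.finrank ℝ V' ≤ Module.finrank ℝ V + 1 := by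
        have h1 := Submodule.finrank_sup_add_finrank_inf_eq V (Submodule.span ℝ {EuclideanSpace.single j (1:ℝ)})
        have h2 : Module.finrank ℝ (Submodule.span ℝ {EuclideanSpace.single j (1:ℝ)}) = 1 := by
          apply finrank_span_singleton
          intro h0
          have := congrFun (congrArg (fun v : EuclideanSpace ℝ (Fin n) => (v : Fin n → ℝ)) h0) j
          simp [EuclideanSpace.single_apply] at this
        rw [h2, ← hV'] at h1
        omega
      have hfr : Module.finrank ℝ V' = Module.finrank ℝ V + 1 := by omega
      obtain ⟨J', hJ'card, hJ'top⟩ := ih V' (by omega)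
      refine ⟨insert j J', ?_, ?_⟩
      · calc (insert j J').card ≤ J'.card + 1 := Finset.card_insert_le _ _
          _ ≤ m + 1 := by omega
      · have : sspan (insert j J')
            = Submodule.span ℝ {EuclideanSpace.single j (1:ℝ)} ⊔ sspan J' := by
          rw [sspan, Finset.coe_insert, Set.image_insert_eq, Submodule.span_insert]
          rfl
        rw [this, ← sup_assoc, ← hV', hJ'top]


/-- generalized corner points with varying coefficients -/
noncomputable def combPt (I : Finset (Fin n)) (f : Fin n → ℝ) : EuclideanSpace ℝ (Fin n) :=
  ∑ j ∈ I, f j • EuclideanSpace.single j (1:ℝ)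

lemma combPt_apply (I : Finset (Fin n)) (f : Fin n → ℝ) (l : Fin n) :
    combPt I f l = if l ∈ I then f l else 0 := by
  classical
  have h1 : combPt I f l = ∑ j ∈ I, (f j • EuclideanSpace.single j (1:ℝ)) l := by
    unfold combPt; rw [WithLp.ofLp_sum, Finset.sum_apply]
  have h2 : ∀ j, (f j • EuclideanSpace.single j (1:ℝ)) l
      = f j * (if l = j then 1 else 0) := by
    intro j
    rw [PiLp.smul_apply, smul_eq_mul, EuclideanSpace.single_apply]
  rw [h1]
  by_cases hl : l ∈ I
  · rw [if_pos hl, Finset.sum_eq_single l]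
    · rw [h2]; simp
    · intro b _ hb; rw [h2]; simp [Ne.symm hb]
    · intro h; exact absurd hl h
  · rw [if_neg hl, Finset.sum_eq_zero]
    intro b hb
    have : l ≠ b := fun h => hl (h ▸ hb)
    rw [h2]; simp [this]


lemma coverIff_S {K S : Set (EuclideanSpace ℝ (Fin n))} {i : ℕ}
    (hKcpt : IsCompact K) (hKconv : Convex ℝ K) (hKu : StdUnconditional n K)
    (hS : S = K ∩ orthant n) (hi2 : i ≤ n) {μ : ℝ} (hμ : 0 < μ) :
    (∀ L : AffineSubspace ℝ (EuclideanSpace ℝ (Fin n)),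
      (L : Set (EuclideanSpace ℝ (Fin n))).Nonempty →
      Module.finrank ℝ L.direction = n - i →
      ((μ • S + intLattice n) ∩ (L : Set (EuclideanSpace ℝ (Fin n)))).Nonempty)
      ↔ (∀ I : Finset (Fin n), I.card = i → cornerPt I (1/μ) ∈ K) := by
  classical
  constructor
  · -- covering implies corner points
    intro h I hI
    -- for each c ∈ [0,1), the point c • cornerPt I (1/μ) lies in K
    have key : ∀ c ∈ Set.Ico (0:ℝ) 1, c • cornerPt I (1/μ) ∈ K := by
      intro c hc
      obtain ⟨hc0, hc1⟩ := hc
      set L : AffineSubspace ℝ (EuclideanSpace ℝ (Fin n)) :=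
        AffineSubspace.mk' (cornerPt I c) (LinearMap.ker (projI I)) with hL
      have hLne : (L : Set (EuclideanSpace ℝ (Fin n))).Nonempty :=
        ⟨cornerPt I c, AffineSubspace.self_mem_mk' _ _⟩
      have hLdim : Module.finrank ℝ L.direction = n - i := by
        rw [hL, AffineSubspace.direction_mk', finrank_ker_projI, hI]
      obtain ⟨y, hy1, hy2⟩ := h L hLne hLdim
      -- y has coordinates = c on I
      have hyc : ∀ j ∈ I, y j = c := by
        intro j hj
        have hmem : y ∈ L := hy2
        rw [hL, AffineSubspace.mem_mk', vsub_eq_sub, mem_ker_projI] at hmem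
        have := hmem j hj
        rw [PiLp.sub_apply, cornerPt_apply, if_pos hj] at this
        linarith
      obtain ⟨u, hu, v, hv, huv⟩ := Set.mem_add.mp hy1
      obtain ⟨sS, hsS, rfl⟩ := Set.mem_smul_set.mp hu
      rw [hS] at hsS
      obtain ⟨hsK, hsO⟩ := hsS
      -- on I, coordinates of s are at least c/μ
      have hsc : ∀ j ∈ I, c / μ ≤ sS j := by
        intro j hj
        obtain ⟨m, hm⟩ := hv j
        have hcoord : μ * sS j + v j = c := by
          have hyj : (μ • sS + v) j = y j := by rw [huv]
          rw [PiLp.add_apply, PiLp.smul_apply, smul_eq_mul] at hyj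
          rw [hyj, hyc j hj]
        have hm0 : (m:ℝ) ≤ 0 := by
          have h1 : (m:ℝ) = c - μ * sS j := by rw [← hm]; linarith
          have h2 : (m:ℝ) < 1 := by
            rw [h1]
            have : 0 ≤ μ * sS j := mul_nonneg hμ.le (hsO j)
            linarith
          have h3 : m < 1 := by exact_mod_cast h2
          have h4 : m ≤ 0 := by omega
          exact_mod_cast h4
        have : c ≤ μ * sS j := by rw [hm] at hcoord; linarith
        rw [div_le_iff₀ hμ]; linarith
      -- fold to the corner
      have hcorner : cornerPt I (c/μ) ∈ K := by
        apply absorb hKconv hKu hsK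
        intro l
        rw [cornerPt_apply]
        by_cases hl : l ∈ I
        · rw [if_pos hl, abs_of_nonneg (by positivity)]
          exact le_trans (hsc l hl) (le_abs_self _)
        · rw [if_neg hl]; simp
      have : cornerPt I (c/μ) = c • cornerPt I (1/μ) := by
        ext l
        rw [PiLp.smul_apply, smul_eq_mul, cornerPt_apply, cornerPt_apply]
        by_cases hl : l ∈ I
        · rw [if_pos hl, if_pos hl]; ring
        · rw [if_neg hl, if_neg hl]; ring
      rwa [this] at hcorner
    -- take the closure as c → 1
    have hpre : IsClosed ((fun t : ℝ => t • cornerPt I (1/μ)) ⁻¹' K) :=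
      hKcpt.isClosed.preimage (continuous_id.smul continuous_const)
    have hsub : Set.Ico (0:ℝ) 1 ⊆ (fun t : ℝ => t • cornerPt I (1/μ)) ⁻¹' K := key
    have h1m : (1:ℝ) ∈ (fun t : ℝ => t • cornerPt I (1/μ)) ⁻¹' K := by
      have : Set.Icc (0:ℝ) 1 ⊆ (fun t : ℝ => t • cornerPt I (1/μ)) ⁻¹' K := by
        rw [← closure_Ico (by norm_num : (0:ℝ) ≠ 1)]
        exact hpre.closure_subset_iff.mpr hsub
      exact this ⟨by norm_num, le_refl 1⟩
    have := h1m
    simpa using this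
  · -- corner points imply covering
    intro h L hLne hLdim
    -- complement the direction by coordinate vectors
    obtain ⟨J, hJcard, hJtop⟩ := exists_coord_sup_top i L.direction (by rw [hLdim]; omega)
    obtain ⟨I, hJI, hIcard⟩ := Finset.exists_superset_card_eq hJcard (by rw [Fintype.card_fin]; exact hi2)
    have hItop : L.direction ⊔ sspan I = ⊤ := by
      apply top_le_iff.mp
      rw [← hJtop]
      exact sup_le_sup_left (sspan_mono hJI) _
    -- find a point of L vanishing off I
    obtain ⟨p, hp⟩ := hLne
    have hpmem : p ∈ L.direction ⊔ sspan I := by rw [hItop]; trivial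
    obtain ⟨v, hv, w, hw, hvw⟩ := Submodule.mem_sup.mp hpmem
    have hwL : w ∈ L := by
      have : (-v) +ᵥ p ∈ L := AffineSubspace.vadd_mem_of_mem_direction (neg_mem hv) hp
      have heq : (-v) +ᵥ p = w := by
        rw [vadd_eq_add, ← hvw]
        abel
      rwa [heq] at this
    have hw0 : ∀ l, l ∉ I → w l = 0 := fun l hl => apply_eq_zero_of_mem_sspan hw hl
    -- build the lattice decomposition
    set sfun : EuclideanSpace ℝ (Fin n) := combPt I (fun l => Int.fract (w l) / μ) with hsfun
    have hsK : sfun ∈ K := by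
      apply absorb hKconv hKu (h I hIcard)
      intro l
      rw [hsfun, combPt_apply, cornerPt_apply]
      by_cases hl : l ∈ I
      · rw [if_pos hl, if_pos hl,
          abs_of_nonneg (div_nonneg (Int.fract_nonneg _) hμ.le),
          abs_of_nonneg (one_div_nonneg.mpr hμ.le)]
        gcongr
        exact (Int.fract_lt_one _).le
      · rw [if_neg hl, if_neg hl]
    have hsS : sfun ∈ S := by
      rw [hS]
      refine ⟨hsK, fun l => ?_⟩
      rw [hsfun, combPt_apply]
      by_cases hl : l ∈ I
      · rw [if_pos hl]
        exact div_nonneg (Int.fract_nonneg _) hμ.le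
      · rw [if_neg hl]
    have hz : w - μ • sfun ∈ intLattice n := by
      intro l
      have hcoord : (w - μ • sfun) l = w l - μ * sfun l := by
        rw [PiLp.sub_apply, PiLp.smul_apply, smul_eq_mul]
      by_cases hl : l ∈ I
      · refine ⟨⌊w l⌋, ?_⟩
        rw [hcoord, hsfun, combPt_apply, if_pos hl, mul_div_cancel₀ _ (ne_of_gt hμ)]
        rw [Int.self_sub_fract]
      · refine ⟨0, ?_⟩
        rw [hcoord, hsfun, combPt_apply, if_neg hl, mul_zero, sub_zero, hw0 l hl]
        simp
    refine ⟨w, Set.mem_add.mpr ⟨μ • sfun, Set.smul_mem_smul_set hsS, w - μ • sfun, hz, by abel⟩, hwL⟩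

lemma coverIff_K {K : Set (EuclideanSpace ℝ (Fin n))} {i : ℕ}
    (hKconv : Convex ℝ K) (hKu : StdUnconditional n K)
    (hi2 : i ≤ n) {μ : ℝ} (hμ : 0 < μ) :
    (∀ L : AffineSubspace ℝ (EuclideanSpace ℝ (Fin n)),
      (L : Set (EuclideanSpace ℝ (Fin n))).Nonempty →
      Module.finrank ℝ L.direction = n - i →
      ((μ • K + intLattice n) ∩ (L : Set (EuclideanSpace ℝ (Fin n)))).Nonempty)
      ↔ (∀ I : Finset (Fin n), I.card = i → cornerPt I (1/(2*μ)) ∈ K) := by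
  classical
  constructor
  · intro h I hI
    set L : AffineSubspace ℝ (EuclideanSpace ℝ (Fin n)) :=
      AffineSubspace.mk' (cornerPt I (1/2)) (LinearMap.ker (projI I)) with hL
    have hLne : (L : Set (EuclideanSpace ℝ (Fin n))).Nonempty :=
      ⟨cornerPt I (1/2), AffineSubspace.self_mem_mk' _ _⟩
    have hLdim : Module.finrank ℝ L.direction = n - i := by
      rw [hL, AffineSubspace.direction_mk', finrank_ker_projI, hI]
    obtain ⟨y, hy1, hy2⟩ := h L hLne hLdim
    have hyc : ∀ j ∈ I, y j = 1/2 := by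
      intro j hj
      have hmem : y ∈ L := hy2
      rw [hL, AffineSubspace.mem_mk', vsub_eq_sub, mem_ker_projI] at hmem
      have := hmem j hj
      rw [PiLp.sub_apply, cornerPt_apply, if_pos hj] at this
      linarith
    obtain ⟨u, hu, v, hv, huv⟩ := Set.mem_add.mp hy1
    obtain ⟨k, hkK, rfl⟩ := Set.mem_smul_set.mp hu
    -- on I, coordinates of k have absolute value at least 1/(2μ)
    have hkc : ∀ j ∈ I, 1/(2*μ) ≤ |k j| := by
      intro j hj
      obtain ⟨m, hm⟩ := hv j
      have hcoord : μ * k j + (m:ℝ) = 1/2 := by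
        have hyj : (μ • k + v) j = y j := by rw [huv]
        rw [PiLp.add_apply, PiLp.smul_apply, smul_eq_mul] at hyj
        rw [← hm, hyj, hyc j hj]
      have habs : 1/2 ≤ |μ * k j| := by
        have : μ * k j = 1/2 - m := by linarith
        rw [this]
        rcases le_or_gt m 0 with hm0 | hm0
        · have : (m:ℝ) ≤ 0 := by exact_mod_cast hm0
          rw [abs_of_nonneg (by linarith)]
          linarith
        · have hm1 : (1:ℤ) ≤ m := hm0
          have : (1:ℝ) ≤ (m:ℝ) := by exact_mod_cast hm1
          rw [abs_of_nonpos (by linarith)]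
          linarith
      rw [abs_mul, abs_of_pos hμ] at habs
      rw [div_le_iff₀ (by positivity)]
      calc (1:ℝ) = 2 * (1/2) := by norm_num
        _ ≤ 2 * (μ * |k j|) := by linarith
        _ = |k j| * (2 * μ) := by ring
    apply absorb hKconv hKu hkK
    intro l
    rw [cornerPt_apply]
    by_cases hl : l ∈ I
    · rw [if_pos hl, abs_of_nonneg (by positivity)]
      exact hkc l hl
    · rw [if_neg hl]; simp
  · intro h L hLne hLdim
    obtain ⟨J, hJcard, hJtop⟩ := exists_coord_sup_top i L.direction (by rw [hLdim]; omega)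
    obtain ⟨I, hJI, hIcard⟩ := Finset.exists_superset_card_eq hJcard (by rw [Fintype.card_fin]; exact hi2)
    have hItop : L.direction ⊔ sspan I = ⊤ := by
      apply top_le_iff.mp
      rw [← hJtop]
      exact sup_le_sup_left (sspan_mono hJI) _
    obtain ⟨p, hp⟩ := hLne
    have hpmem : p ∈ L.direction ⊔ sspan I := by rw [hItop]; trivial
    obtain ⟨v, hv, w, hw, hvw⟩ := Submodule.mem_sup.mp hpmem
    have hwL : w ∈ L := by
      have : (-v) +ᵥ p ∈ L := AffineSubspace.vadd_mem_of_mem_direction (neg_mem hv) hp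
      have heq : (-v) +ᵥ p = w := by
        rw [vadd_eq_add, ← hvw]
        abel
      rwa [heq] at this
    have hw0 : ∀ l, l ∉ I → w l = 0 := fun l hl => apply_eq_zero_of_mem_sspan hw hl
    set kfun : EuclideanSpace ℝ (Fin n) := combPt I (fun l => (w l - round (w l)) / μ) with hkfun
    have hkK : kfun ∈ K := by
      apply absorb hKconv hKu (h I hIcard)
      intro l
      rw [hkfun, combPt_apply, cornerPt_apply]
      by_cases hl : l ∈ I
      · have h2μ : (0:ℝ) < 2 * μ := by linarith
        rw [if_pos hl, if_pos hl, abs_div, abs_of_pos hμ,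
          abs_of_nonneg (one_div_nonneg.mpr h2μ.le)]
        have h1 : |w l - round (w l)| ≤ 1/2 := abs_sub_round (w l)
        rw [div_le_div_iff₀ hμ h2μ]
        calc |w l - ↑(round (w l))| * (2 * μ) ≤ (1/2) * (2 * μ) := by
              apply mul_le_mul_of_nonneg_right h1 h2μ.le
          _ = 1 * μ := by ring
      · rw [if_neg hl, if_neg hl]
    have hz : w - μ • kfun ∈ intLattice n := by
      intro l
      have hcoord : (w - μ • kfun) l = w l - μ * kfun l := by
        rw [PiLp.sub_apply, PiLp.smul_apply, smul_eq_mul]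
      by_cases hl : l ∈ I
      · refine ⟨round (w l), ?_⟩
        rw [hcoord, hkfun, combPt_apply, if_pos hl, mul_div_cancel₀ _ (ne_of_gt hμ)]
        ring
      · refine ⟨0, ?_⟩
        rw [hcoord, hkfun, combPt_apply, if_neg hl, mul_zero, sub_zero, hw0 l hl]
        simp
    refine ⟨w, Set.mem_add.mpr ⟨μ • kfun, Set.smul_mem_smul_set hkK, w - μ • kfun, hz, by abel⟩, hwL⟩

end CovMinAux

/-- For a standard unconditional convex body `K` in `ℝⁿ` and `S = K ∩ ℝⁿ_{≥0}`, one has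
`μ_i(S) = 2·μ_i(K)` for every `i ∈ {1, …, n}`. -/
theorem covMin_inter_orthant (n : ℕ) (hn : 1 ≤ n) (K S : Set (EuclideanSpace ℝ (Fin n)))
    (hKcpt : IsCompact K) (hKconv : Convex ℝ K) (hKint : (interior K).Nonempty)
    (hKuncond : StdUnconditional n K) (hS : S = K ∩ orthant n)
    (i : ℕ) (hi1 : 1 ≤ i) (hi2 : i ≤ n) :
    covMin n i S = 2 * covMin n i K := by
  classical
  have hsetS : {μ : ℝ | 0 < μ ∧ ∀ L : AffineSubspace ℝ (EuclideanSpace ℝ (Fin n)),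
      (L : Set (EuclideanSpace ℝ (Fin n))).Nonempty →
      Module.finrank ℝ L.direction = n - i →
      ((μ • S + intLattice n) ∩ (L : Set (EuclideanSpace ℝ (Fin n)))).Nonempty}
      = (2:ℝ) • {μ : ℝ | 0 < μ ∧ ∀ L : AffineSubspace ℝ (EuclideanSpace ℝ (Fin n)),
      (L : Set (EuclideanSpace ℝ (Fin n))).Nonempty →
      Module.finrank ℝ L.direction = n - i →
      ((μ • K + intLattice n) ∩ (L : Set (EuclideanSpace ℝ (Fin n)))).Nonempty} := by
    ext μ
    simp only [Set.mem_setOf_eq, Set.mem_smul_set, smul_eq_mul]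
    constructor
    · rintro ⟨hμ, hcov⟩
      have hμ2 : 0 < μ/2 := by linarith
      refine ⟨μ/2, ⟨hμ2, ?_⟩, by ring⟩
      rw [CovMinAux.coverIff_K hKconv hKuncond hi2 hμ2,
        show (1:ℝ)/(2*(μ/2)) = 1/μ by ring]
      exact (CovMinAux.coverIff_S hKcpt hKconv hKuncond hS hi2 hμ).mp hcov
    · rintro ⟨y, ⟨hy0, hycov⟩, rfl⟩
      have h2y : (0:ℝ) < 2 * y := by linarith
      refine ⟨h2y, ?_⟩
      rw [CovMinAux.coverIff_S hKcpt hKconv hKuncond hS hi2 h2y,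
        show (1:ℝ)/(2*y) = 1/(2*y) from rfl]
      exact (CovMinAux.coverIff_K hKconv hKuncond hi2 hy0).mp hycov
  show sInf _ = 2 * sInf _
  rw [hsetS, Real.sInf_smul_of_nonneg (by norm_num : (0:ℝ) ≤ 2), smul_eq_mul]
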